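/- Let 𝔄 be an abelian category. The canonical functor from the localization of admissible Π-diagrams, lim↔ 𝔄 := S_a⁻¹ 𝔄^Π_a, to the localization of all Π-diagrams, lim↔^{ab} 𝔄 := S⁻¹ 𝔄^Π, is fully faithful. -/

import Mathlib

open CategoryTheory CategoryTheory.Limits
set_option linter.unusedSectionVars false
set_option linter.unusedVariables false

universe v u

/-- `Π = {(a,b) ∈ ℤ² : a ≤ b}` with the reverse componentwise order. -/
structure PiSet : Type where
  a : ℤ
  b : ℤ
  le_ab : a ≤ b

instance : PartialOrder PiSet where
  le x y := y.a ≤ x.a ∧ y.b ≤ x.b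
  le_refl x := ⟨le_refl _, le_refl _⟩
  le_trans x y z h h' := ⟨h'.1.trans h.1, h'.2.trans h.2⟩
  le_antisymm x y h h' := by
    cases x; cases y
    simp only [PiSet.mk.injEq]
    exact ⟨le_antisymm h'.1 h.1, le_antisymm h'.2 h.2⟩

variable {𝔄 : Type u} [Category.{v} 𝔄] [Abelian 𝔄]

/-- An object `E` of `𝔄^Π` is *admissible* if for all `a ≤ b ≤ c` the sequence
`0 → E^{b,c} → E^{a,c} → E^{a,b} → 0` (given by the transition maps) is short exact. -/
def Admissible (E : PiSet ⥤ 𝔄) : Prop :=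
  ∀ (a b c : ℤ) (hab : a ≤ b) (hbc : b ≤ c),
    ∃ w : E.map (homOfLE (show (⟨b, c, hbc⟩ : PiSet) ≤ ⟨a, c, hab.trans hbc⟩ from
            ⟨hab, le_refl c⟩)) ≫
          E.map (homOfLE (show (⟨a, c, hab.trans hbc⟩ : PiSet) ≤ ⟨a, b, hab⟩ from
            ⟨le_refl a, hbc⟩)) = 0,
      (ShortComplex.mk _ _ w).ShortExact

/-- `M`: order-preserving maps `ℤ → ℤ` tending to `±∞` at `±∞`. -/
def inM (φ : ℤ → ℤ) : Prop :=
  Monotone φ ∧ Filter.Tendsto φ Filter.atTop Filter.atTop ∧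
    Filter.Tendsto φ Filter.atBot Filter.atBot

/-- The diagram `φ̃(E)` with `φ̃(E)^{a,b} = E^{φ(a),φ(b)}`. -/
def tilde (φ : ℤ → ℤ) (hφ : Monotone φ) (E : PiSet ⥤ 𝔄) : PiSet ⥤ 𝔄 where
  obj p := E.obj ⟨φ p.a, φ p.b, hφ p.le_ab⟩
  map {p q} h := E.map (homOfLE ⟨hφ (leOfHom h).1, hφ (leOfHom h).2⟩)
  map_id p := by
    rw [← E.map_id]
    exact congrArg E.map (Subsingleton.elim _ _)
  map_comp f g := by
    rw [← E.map_comp]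
    exact congrArg E.map (Subsingleton.elim _ _)

/-- The canonical morphism `φ̃(E) → ψ̃(E)` for `φ ≥ ψ` pointwise, given by transition maps. -/
def canMap (φ ψ : ℤ → ℤ) (hφ : Monotone φ) (hψ : Monotone ψ) (h : ∀ i, ψ i ≤ φ i)
    (E : PiSet ⥤ 𝔄) : tilde φ hφ E ⟶ tilde ψ hψ E where
  app p := E.map (homOfLE ⟨h _, h _⟩)
  naturality p q f := by
    dsimp [tilde]
    rw [← E.map_comp, ← E.map_comp]
    exact congrArg E.map (Subsingleton.elim _ _)

/-- The class `S` of canonical morphisms `φ̃(E) → ψ̃(E)` for `φ ≥ ψ` in `M`. -/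
def Scl : MorphismProperty (PiSet ⥤ 𝔄) := fun X Y f =>
  ∃ (E : PiSet ⥤ 𝔄) (φ ψ : ℤ → ℤ) (hφ : inM φ) (hψ : inM ψ) (h : ∀ i, ψ i ≤ φ i)
    (hX : X = tilde φ hφ.1 E) (hY : Y = tilde ψ hψ.1 E),
    f = eqToHom hX ≫ canMap φ ψ hφ.1 hψ.1 h E ≫ eqToHom hY.symm

/-- `N(𝔄)`: the objects of `𝔄^Π` which become zero in the localization `S⁻¹𝔄^Π`. -/
def Nsub (E : PiSet ⥤ 𝔄) : Prop :=
  CategoryTheory.Limits.IsZero ((Scl (𝔄 := 𝔄)).Q.obj E)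

/-- The class `S_a`: the elements of `S` which are morphisms of the full
subcategory `𝔄^Π_a` of admissible diagrams. -/
def Sa : MorphismProperty (CategoryTheory.ObjectProperty.FullSubcategory (Admissible (𝔄 := 𝔄))) :=
  fun _ _ f => Scl ((ObjectProperty.ι (Admissible (𝔄 := 𝔄))).map f)

lemma tilde_id (E : PiSet ⥤ 𝔄) : tilde id (fun _ _ h => h) E = E := rfl

/-- functoriality of tilde in the diagram -/
def tildeNat (ρ : ℤ → ℤ) (hρ : Monotone ρ) {X Y : PiSet ⥤ 𝔄} (w : X ⟶ Y) :
    tilde ρ hρ X ⟶ tilde ρ hρ Y where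
  app p := w.app ⟨ρ p.a, ρ p.b, hρ p.le_ab⟩
  naturality p q m := w.naturality _

lemma canMap_comp (φ ψ χ : ℤ → ℤ) (hφ : Monotone φ) (hψ : Monotone ψ) (hχ : Monotone χ)
    (h1 : ∀ i, ψ i ≤ φ i) (h2 : ∀ i, χ i ≤ ψ i) (E : PiSet ⥤ 𝔄) :
    canMap φ ψ hφ hψ h1 E ≫ canMap ψ χ hψ hχ h2 E
      = canMap φ χ hφ hχ (fun i => (h2 i).trans (h1 i)) E := by
  ext p
  dsimp [canMap]
  refine (E.map_comp _ _).symm.trans ?_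
  exact congrArg E.map (Subsingleton.elim _ _)

lemma canMap_self (φ : ℤ → ℤ) (hφ : Monotone φ) (E : PiSet ⥤ 𝔄) :
    canMap φ φ hφ hφ (fun i => le_refl _) E = 𝟙 _ := by
  ext p
  dsimp [canMap]
  rw [E.map_id]
  rfl

lemma Scl_canMap (φ ψ : ℤ → ℤ) (hφ : inM φ) (hψ : inM ψ) (h : ∀ i, ψ i ≤ φ i)
    (E : PiSet ⥤ 𝔄) : Scl (canMap φ ψ hφ.1 hψ.1 h E) :=
  ⟨E, φ, ψ, hφ, hψ, h, rfl, rfl, by simp⟩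

lemma inM_id : inM (id : ℤ → ℤ) := ⟨monotone_id, Filter.tendsto_id, Filter.tendsto_id⟩

lemma Scl_can_id (ρ : ℤ → ℤ) (hρ : inM ρ) (hge : ∀ i, i ≤ ρ i) (X : PiSet ⥤ 𝔄) :
    Scl (X := tilde ρ hρ.1 X) (Y := X) (canMap ρ id hρ.1 monotone_id hge X) :=
  Scl_canMap ρ id hρ inM_id hge X

lemma exists_rho {φ ψ : ℤ → ℤ} (hφ : inM φ) (hψ : inM ψ) :
    ∃ ρ : ℤ → ℤ, inM ρ ∧ (∀ i, i ≤ ρ i) ∧ (∀ i, φ i ≤ ψ (ρ i)) := by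
  have hex : ∀ i : ℤ, ∃ lb : ℤ, (φ i ≤ ψ lb) ∧ ∀ z : ℤ, φ i ≤ ψ z → lb ≤ z := by
    intro i
    have hne : ∃ z : ℤ, φ i ≤ ψ z := (hψ.2.1.eventually_ge_atTop (φ i)).exists
    have hbdd : ∃ b : ℤ, ∀ z : ℤ, (φ i ≤ ψ z) → b ≤ z := by
      obtain ⟨b, hb⟩ := Filter.eventually_atBot.1 (hψ.2.2.eventually_lt_atBot (φ i))
      refine ⟨b + 1, fun z hz => ?_⟩
      by_contra hlt
      exact absurd (hz.trans_lt (hb z (by omega))) (lt_irrefl _)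
    exact Int.exists_least_of_bdd hbdd hne
  choose l hl1 hl2 using hex
  have hlmono : Monotone l := fun i j hij => hl2 i _ ((hφ.1 hij).trans (hl1 j))
  refine ⟨fun i => max i (l i), ⟨?_, ?_, ?_⟩, fun i => le_max_left _ _,
    fun i => le_trans (hl1 i) (hψ.1 (le_max_right _ _))⟩
  · exact fun i j hij => max_le_max hij (hlmono hij)
  · exact Filter.tendsto_atTop_mono (fun i => le_max_left i (l i)) Filter.tendsto_id
  · rw [Filter.tendsto_atBot]
    intro b
    have h1 : ∀ᶠ i in Filter.atBot, (i : ℤ) ≤ b := Filter.eventually_le_atBot b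
    have h2 : ∀ᶠ i in Filter.atBot, φ i ≤ ψ b := (hφ.2.2.eventually_le_atBot (ψ b))
    filter_upwards [h1, h2] with i hi1 hi2
    exact max_le hi1 (hl2 i b hi2)

lemma ore_gen (E : PiSet ⥤ 𝔄) (φ ψ : ℤ → ℤ) (hφ : inM φ) (hψ : inM ψ) (h : ∀ i, ψ i ≤ φ i)
    (X : PiSet ⥤ 𝔄) (f : X ⟶ tilde ψ hψ.1 E) :
    ∃ (ρ : ℤ → ℤ) (hρ : inM ρ) (hge : ∀ i, i ≤ ρ i) (f' : tilde ρ hρ.1 X ⟶ tilde φ hφ.1 E),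
      canMap ρ id hρ.1 monotone_id hge X ≫ f = f' ≫ canMap φ ψ hφ.1 hψ.1 h E := by
  obtain ⟨ρ, hρ, hge, hcond⟩ := exists_rho hφ hψ
  refine ⟨ρ, hρ, hge,
    tildeNat ρ hρ.1 f ≫ canMap (ψ ∘ ρ) φ (hψ.1.comp hρ.1) hφ.1 hcond E, ?_⟩
  ext p
  simp only [NatTrans.comp_app]
  have hnat := f.naturality (homOfLE (show (⟨ρ p.a, ρ p.b, hρ.1 p.le_ab⟩ : PiSet) ≤ p from
    ⟨hge _, hge _⟩))
  dsimp [canMap, tilde, tildeNat] at hnat ⊢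
  refine (NatTrans.comp_app _ _ _).trans (hnat.trans (Eq.trans ?_ (Category.assoc _ _ _).symm))
  exact congrArg (f.app _ ≫ ·) ((congrArg E.map (Subsingleton.elim _ _)).trans (E.map_comp _ _))

lemma ext_gen (E : PiSet ⥤ 𝔄) (φ ψ : ℤ → ℤ) (hφ : inM φ) (hψ : inM ψ) (h : ∀ i, ψ i ≤ φ i)
    (X : PiSet ⥤ 𝔄) (f₁ f₂ : X ⟶ tilde φ hφ.1 E)
    (hf : f₁ ≫ canMap φ ψ hφ.1 hψ.1 h E = f₂ ≫ canMap φ ψ hφ.1 hψ.1 h E) :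
    ∃ (ρ : ℤ → ℤ) (hρ : inM ρ) (hge : ∀ i, i ≤ ρ i),
      canMap ρ id hρ.1 monotone_id hge X ≫ f₁ = canMap ρ id hρ.1 monotone_id hge X ≫ f₂ := by
  obtain ⟨ρ, hρ, hge, hcond⟩ := exists_rho hφ hψ
  refine ⟨ρ, hρ, hge, ?_⟩
  ext p
  have key : ∀ (g : X ⟶ tilde φ hφ.1 E),
      (canMap ρ id hρ.1 monotone_id hge X ≫ g).app p
        = (g ≫ canMap φ ψ hφ.1 hψ.1 h E).app ⟨ρ p.a, ρ p.b, hρ.1 p.le_ab⟩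
          ≫ E.map (homOfLE (show (⟨ψ (ρ p.a), ψ (ρ p.b), hψ.1 (hρ.1 p.le_ab)⟩ : PiSet)
              ≤ ⟨φ p.a, φ p.b, hφ.1 p.le_ab⟩ from ⟨hcond _, hcond _⟩)) := by
    intro g
    simp only [NatTrans.comp_app]
    have hnat := g.naturality (homOfLE (show (⟨ρ p.a, ρ p.b, hρ.1 p.le_ab⟩ : PiSet) ≤ p from
      ⟨hge _, hge _⟩))
    dsimp [canMap, tilde] at hnat ⊢
    refine (NatTrans.comp_app _ _ _).trans (hnat.trans (Eq.trans ?_ (Category.assoc _ _ _).symm))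
    exact congrArg (g.app _ ≫ ·) ((congrArg E.map (Subsingleton.elim _ _)).trans (E.map_comp _ _))
  rw [key f₁, key f₂, hf]

lemma admissible_tilde (ρ : ℤ → ℤ) (hρ : Monotone ρ) (E : PiSet ⥤ 𝔄) (hE : Admissible E) :
    Admissible (tilde ρ hρ E) := fun a b c hab hbc => hE (ρ a) (ρ b) (ρ c) (hρ hab) (hρ hbc)

/-- closure of `Scl` under composition -/
inductive TclAux : ∀ {X Y : PiSet ⥤ 𝔄}, (X ⟶ Y) → Prop
  | of {X Y : PiSet ⥤ 𝔄} (f : X ⟶ Y) (hf : Scl f) : TclAux f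
  | id (X : PiSet ⥤ 𝔄) : TclAux (𝟙 X)
  | comp {X Y Z : PiSet ⥤ 𝔄} (f : X ⟶ Y) (g : Y ⟶ Z) :
      TclAux f → TclAux g → TclAux (f ≫ g)

def Tcl : MorphismProperty (PiSet ⥤ 𝔄) := fun _ _ f => TclAux f

instance : (Tcl (𝔄 := 𝔄)).IsMultiplicative where
  id_mem X := TclAux.id X
  comp_mem f g hf hg := TclAux.comp f g hf hg

lemma tcl_ore {Y Y' : PiSet ⥤ 𝔄} (s : Y ⟶ Y') (hs : Tcl s) :
    ∀ {X : PiSet ⥤ 𝔄} (f : X ⟶ Y'),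
      ∃ (X' : PiSet ⥤ 𝔄) (s' : X' ⟶ X) (_ : Tcl s') (f' : X' ⟶ Y), s' ≫ f = f' ≫ s := by
  induction hs with
  | of s hs =>
    intro X f
    obtain ⟨E, φ, ψ, hφ, hψ, h, hXeq, hYeq, hfeq⟩ := hs
    subst hXeq hYeq
    rw [eqToHom_refl, eqToHom_refl, Category.id_comp, Category.comp_id] at hfeq
    subst hfeq
    obtain ⟨ρ, hρ, hge, f', heq⟩ := ore_gen E φ ψ hφ hψ h X f
    exact ⟨_, _, TclAux.of _ (Scl_can_id ρ hρ hge X), f', heq⟩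
  | id Z => exact fun f => ⟨_, 𝟙 _, TclAux.id _, f, by simp⟩
  | comp s₁ s₂ _ _ ih₁ ih₂ =>
    intro X f
    obtain ⟨X₁, a, ha, g₁, h1⟩ := ih₂ f
    obtain ⟨X₂, b, hb, g₂, h2⟩ := ih₁ g₁
    exact ⟨X₂, b ≫ a, TclAux.comp _ _ hb ha, g₂, by
      rw [Category.assoc, h1, ← Category.assoc, h2, Category.assoc]⟩

lemma tcl_ext {Y Y' : PiSet ⥤ 𝔄} (s : Y ⟶ Y') (hs : Tcl s) :
    ∀ {X : PiSet ⥤ 𝔄} (f₁ f₂ : X ⟶ Y), f₁ ≫ s = f₂ ≫ s →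
      ∃ (X' : PiSet ⥤ 𝔄) (t : X' ⟶ X) (_ : Tcl t), t ≫ f₁ = t ≫ f₂ := by
  induction hs with
  | of s hs =>
    intro X f₁ f₂ hf
    obtain ⟨E, φ, ψ, hφ, hψ, h, hXeq, hYeq, hfeq⟩ := hs
    subst hXeq hYeq
    rw [eqToHom_refl, eqToHom_refl, Category.id_comp, Category.comp_id] at hfeq
    subst hfeq
    obtain ⟨ρ, hρ, hge, heq⟩ := ext_gen E φ ψ hφ hψ h X f₁ f₂ hf
    exact ⟨_, _, TclAux.of _ (Scl_can_id ρ hρ hge X), heq⟩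
  | id Z => exact fun f₁ f₂ hf => ⟨_, 𝟙 _, TclAux.id _, by simpa using hf⟩
  | comp s₁ s₂ _ _ ih₁ ih₂ =>
    intro X f₁ f₂ hf
    obtain ⟨X₁, t, ht, h1⟩ := ih₂ (f₁ ≫ s₁) (f₂ ≫ s₁) (by simpa using hf)
    obtain ⟨X₂, t', ht', h2⟩ := ih₁ (t ≫ f₁) (t ≫ f₂) (by simpa using h1)
    exact ⟨X₂, t' ≫ t, TclAux.comp _ _ ht' ht, by simpa using h2⟩

instance : (Tcl (𝔄 := 𝔄)).HasRightCalculusOfFractions where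
  exists_rightFraction X Y φ := by
    obtain ⟨X', s', hs', f', heq⟩ := tcl_ore φ.s φ.hs φ.f
    exact ⟨MorphismProperty.RightFraction.mk s' hs' f', heq⟩
  ext X Y Y' f₁ f₂ s hs hf := by
    obtain ⟨X', t, ht, heq⟩ := tcl_ext s hs f₁ f₂ hf
    exact ⟨X', t, ht, heq⟩

abbrev Adm (𝔄 : Type u) [Category.{v} 𝔄] [Abelian 𝔄] := ObjectProperty.FullSubcategory (Admissible (𝔄 := 𝔄))

lemma sa_ore {Y Y' : Adm 𝔄} (s : Y ⟶ Y') (hs : Sa s) {X : Adm 𝔄} (f : X ⟶ Y') :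
    ∃ (X' : Adm 𝔄) (s' : X' ⟶ X) (_ : Sa s') (f' : X' ⟶ Y), s' ≫ f = f' ≫ s := by
  obtain ⟨E, φ, ψ, hφ, hψ, h, hXeq, hYeq, hfeq⟩ := hs
  obtain ⟨ρ, hρ, hge, f'', heq⟩ := ore_gen E φ ψ hφ hψ h X.obj
    (f.hom ≫ eqToHom hYeq)
  refine ⟨⟨tilde ρ hρ.1 X.obj, admissible_tilde ρ hρ.1 X.obj X.property⟩,
    ObjectProperty.homMk (canMap ρ id hρ.1 monotone_id hge X.obj), Scl_can_id ρ hρ hge X.obj,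
    ObjectProperty.homMk (show tilde ρ hρ.1 X.obj ⟶ Y.obj from f'' ≫ eqToHom hXeq.symm), ?_⟩
  apply ObjectProperty.hom_ext
  show canMap ρ id hρ.1 monotone_id hge X.obj ≫ f.hom
    = (f'' ≫ eqToHom hXeq.symm) ≫ s.hom
  have hs' : s.hom
      = eqToHom hXeq ≫ canMap φ ψ hφ.1 hψ.1 h E ≫ eqToHom hYeq.symm := hfeq
  rw [hs']
  rw [← cancel_mono (eqToHom hYeq)]
  simp only [Category.assoc, eqToHom_trans, eqToHom_trans_assoc, eqToHom_refl, Category.comp_id, Category.id_comp]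
  exact (Category.assoc _ _ _).trans heq

lemma sa_ext {Y Y' : Adm 𝔄} (s : Y ⟶ Y') (hs : Sa s) {X : Adm 𝔄} (f₁ f₂ : X ⟶ Y)
    (hf : f₁ ≫ s = f₂ ≫ s) :
    ∃ (X' : Adm 𝔄) (t : X' ⟶ X) (_ : Sa t), t ≫ f₁ = t ≫ f₂ := by
  obtain ⟨E, φ, ψ, hφ, hψ, h, hXeq, hYeq, hfeq⟩ := hs
  set ι := ObjectProperty.ι (Admissible (𝔄 := 𝔄)) with hι
  have hf' : (ι.map f₁ ≫ eqToHom hXeq) ≫ canMap φ ψ hφ.1 hψ.1 h E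
      = (ι.map f₂ ≫ eqToHom hXeq) ≫ canMap φ ψ hφ.1 hψ.1 h E := by
    have h2 : ι.map f₁ ≫ ι.map s = ι.map f₂ ≫ ι.map s := by
      rw [← ι.map_comp, ← ι.map_comp, hf]
    rw [hfeq] at h2
    rw [← cancel_mono (eqToHom hYeq.symm)]
    simpa only [Category.assoc] using h2
  obtain ⟨ρ, hρ, hge, heq⟩ := ext_gen E φ ψ hφ hψ h X.obj _ _ hf'
  refine ⟨⟨tilde ρ hρ.1 X.obj, admissible_tilde ρ hρ.1 X.obj X.property⟩,
    ObjectProperty.homMk (canMap ρ id hρ.1 monotone_id hge X.obj), Scl_can_id ρ hρ hge X.obj, ?_⟩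
  apply ObjectProperty.hom_ext
  show canMap ρ id hρ.1 monotone_id hge X.obj ≫ ι.map f₁
    = canMap ρ id hρ.1 monotone_id hge X.obj ≫ ι.map f₂
  rw [← cancel_mono (eqToHom hXeq)]
  exact (Category.assoc _ _ _).trans (heq.trans (Category.assoc _ _ _).symm)

/-- closure of `Sa` under composition -/
inductive TaAux : ∀ {X Y : Adm 𝔄}, (X ⟶ Y) → Prop
  | of {X Y : Adm 𝔄} (f : X ⟶ Y) (hf : Sa f) : TaAux f
  | id (X : Adm 𝔄) : TaAux (𝟙 X)
  | comp {X Y Z : Adm 𝔄} (f : X ⟶ Y) (g : Y ⟶ Z) : TaAux f → TaAux g → TaAux (f ≫ g)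

def Ta : MorphismProperty (Adm 𝔄) := fun _ _ f => TaAux f

instance : (Ta (𝔄 := 𝔄)).IsMultiplicative where
  id_mem X := TaAux.id X
  comp_mem f g hf hg := TaAux.comp f g hf hg

lemma ta_ore {Y Y' : Adm 𝔄} (s : Y ⟶ Y') (hs : Ta s) :
    ∀ {X : Adm 𝔄} (f : X ⟶ Y'),
      ∃ (X' : Adm 𝔄) (s' : X' ⟶ X) (_ : Ta s') (f' : X' ⟶ Y), s' ≫ f = f' ≫ s := by
  induction hs with
  | of s hs =>
    intro X f
    obtain ⟨X', s', hs', f', heq⟩ := sa_ore s hs f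
    exact ⟨X', s', TaAux.of _ hs', f', heq⟩
  | id Z => exact fun f => ⟨_, 𝟙 _, TaAux.id _, f, by simp⟩
  | comp s₁ s₂ _ _ ih₁ ih₂ =>
    intro X f
    obtain ⟨X₁, a, ha, g₁, h1⟩ := ih₂ f
    obtain ⟨X₂, b, hb, g₂, h2⟩ := ih₁ g₁
    exact ⟨X₂, b ≫ a, TaAux.comp _ _ hb ha, g₂, by
      rw [Category.assoc, h1, ← Category.assoc, h2, Category.assoc]⟩

lemma ta_ext {Y Y' : Adm 𝔄} (s : Y ⟶ Y') (hs : Ta s) :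
    ∀ {X : Adm 𝔄} (f₁ f₂ : X ⟶ Y), f₁ ≫ s = f₂ ≫ s →
      ∃ (X' : Adm 𝔄) (t : X' ⟶ X) (_ : Ta t), t ≫ f₁ = t ≫ f₂ := by
  induction hs with
  | of s hs =>
    intro X f₁ f₂ hf
    obtain ⟨X', t, ht, heq⟩ := sa_ext s hs f₁ f₂ hf
    exact ⟨X', t, TaAux.of _ ht, heq⟩
  | id Z => exact fun f₁ f₂ hf => ⟨_, 𝟙 _, TaAux.id _, by simpa using hf⟩
  | comp s₁ s₂ _ _ ih₁ ih₂ =>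
    intro X f₁ f₂ hf
    obtain ⟨X₁, t, ht, h1⟩ := ih₂ (f₁ ≫ s₁) (f₂ ≫ s₁) (by simpa using hf)
    obtain ⟨X₂, t', ht', h2⟩ := ih₁ (t ≫ f₁) (t ≫ f₂) (by simpa using h1)
    exact ⟨X₂, t' ≫ t, TaAux.comp _ _ ht' ht, by simpa using h2⟩

instance : (Ta (𝔄 := 𝔄)).HasRightCalculusOfFractions where
  exists_rightFraction X Y φ := by
    obtain ⟨X', s', hs', f', heq⟩ := ta_ore φ.s φ.hs φ.f
    exact ⟨MorphismProperty.RightFraction.mk s' hs' f', heq⟩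
  ext X Y Y' f₁ f₂ s hs hf := by
    obtain ⟨X', t, ht, heq⟩ := ta_ext s hs f₁ f₂ hf
    exact ⟨X', t, ht, heq⟩

universe w w'

lemma tcl_inverted {D : Type w} [Category.{w'} D] (F : (PiSet ⥤ 𝔄) ⥤ D)
    (h : (Scl (𝔄 := 𝔄)).IsInvertedBy F) : (Tcl (𝔄 := 𝔄)).IsInvertedBy F := by
  intro X Y f hf
  induction hf with
  | of f hf => exact h f hf
  | id X => rw [F.map_id]; infer_instance
  | comp f g _ _ ih₁ ih₂ =>
    rw [F.map_comp]
    have := ih₁; have := ih₂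
    infer_instance

lemma ta_inverted {D : Type w} [Category.{w'} D] (F : Adm 𝔄 ⥤ D)
    (h : (Sa (𝔄 := 𝔄)).IsInvertedBy F) : (Ta (𝔄 := 𝔄)).IsInvertedBy F := by
  intro X Y f hf
  induction hf with
  | of f hf => exact h f hf
  | id X => rw [F.map_id]; infer_instance
  | comp f g _ _ ih₁ ih₂ =>
    rw [F.map_comp]
    have := ih₁; have := ih₂
    infer_instance

/-- `Scl.Q` is also a localization functor with respect to the closure `Tcl`. -/
noncomputable def tclSUP (D : Type w) [Category.{w'} D] :
    Localization.StrictUniversalPropertyFixedTarget (Scl (𝔄 := 𝔄)).Q (Tcl (𝔄 := 𝔄)) D where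
  inverts := tcl_inverted _ (Scl (𝔄 := 𝔄)).Q_inverts
  lift F hF := Localization.Construction.lift F (fun _ _ f hf => hF f (TclAux.of f hf))
  fac F hF := Localization.Construction.fac _ _
  uniq := Localization.Construction.uniq

instance scl_q_isLocalization_tcl : (Scl (𝔄 := 𝔄)).Q.IsLocalization (Tcl (𝔄 := 𝔄)) :=
  Functor.IsLocalization.mk' _ _ (tclSUP _) (tclSUP _)

noncomputable def taSUP (D : Type w) [Category.{w'} D] :
    Localization.StrictUniversalPropertyFixedTarget (Sa (𝔄 := 𝔄)).Q (Ta (𝔄 := 𝔄)) D where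
  inverts := ta_inverted _ (Sa (𝔄 := 𝔄)).Q_inverts
  lift F hF := Localization.Construction.lift F (fun _ _ f hf => hF f (TaAux.of f hf))
  fac F hF := Localization.Construction.fac _ _
  uniq := Localization.Construction.uniq

instance sa_q_isLocalization_ta : (Sa (𝔄 := 𝔄)).Q.IsLocalization (Ta (𝔄 := 𝔄)) :=
  Functor.IsLocalization.mk' _ _ (taSUP _) (taSUP _)

lemma inM_comp {ρ₁ ρ₂ : ℤ → ℤ} (h₁ : inM ρ₁) (h₂ : inM ρ₂) : inM (ρ₂ ∘ ρ₁) :=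
  ⟨h₂.1.comp h₁.1, h₂.2.1.comp h₁.2.1, h₂.2.2.comp h₁.2.2⟩

lemma can_id_natural (ρ : ℤ → ℤ) (hρ : inM ρ) (hge : ∀ i, i ≤ ρ i) {A B : PiSet ⥤ 𝔄}
    (w : A ⟶ B) :
    tildeNat ρ hρ.1 w ≫ canMap ρ id hρ.1 monotone_id hge B
      = canMap ρ id hρ.1 monotone_id hge A ≫ w := by
  ext p
  exact (w.naturality (homOfLE (show (⟨ρ p.a, ρ p.b, hρ.1 p.le_ab⟩ : PiSet) ≤ p from
    ⟨hge _, hge _⟩))).symm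

lemma dom {Z V : PiSet ⥤ 𝔄} (g : Z ⟶ V) (hg : Tcl g) :
    ∃ (ρ : ℤ → ℤ) (hρ : inM ρ) (hge : ∀ i, i ≤ ρ i) (w : tilde ρ hρ.1 V ⟶ Z),
      w ≫ g = canMap ρ id hρ.1 monotone_id hge V := by
  induction hg with
  | of g hg =>
    obtain ⟨E, φ, ψ, hφ, hψ, h, hXeq, hYeq, hfeq⟩ := hg
    subst hXeq hYeq
    rw [eqToHom_refl, eqToHom_refl, Category.id_comp, Category.comp_id] at hfeq
    subst hfeq
    obtain ⟨ρ, hρ, hge, hcond⟩ := exists_rho hφ hψ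
    refine ⟨ρ, hρ, hge, canMap (ψ ∘ ρ) φ (hψ.1.comp hρ.1) hφ.1 hcond E, ?_⟩
    ext p
    dsimp [canMap, tilde]
    rw [← E.map_comp]
    exact congrArg E.map (Subsingleton.elim _ _)
  | id Z =>
    exact ⟨id, inM_id, fun i => le_refl i, 𝟙 Z, by
      exact (Category.comp_id _).trans (canMap_self id monotone_id Z).symm⟩
  | comp g₁ g₂ _ _ ih₁ ih₂ =>
    obtain ⟨ρ₂, hρ₂, hge₂, w₂, hw₂⟩ := ih₂
    obtain ⟨ρ₁, hρ₁, hge₁, w₁, hw₁⟩ := ih₁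
    refine ⟨ρ₂ ∘ ρ₁, inM_comp hρ₁ hρ₂, fun i => (hge₁ i).trans (hge₂ (ρ₁ i)),
      (tildeNat ρ₁ hρ₁.1 w₂ ≫ w₁ :
        tilde ρ₁ hρ₁.1 (tilde ρ₂ hρ₂.1 _) ⟶ _), ?_⟩
    erw [Category.assoc, ← Category.assoc w₁, hw₁, ← Category.assoc,
      can_id_natural ρ₁ hρ₁ hge₁ w₂, Category.assoc, hw₂]
    ext p
    dsimp [canMap, tilde]
    refine (NatTrans.comp_app _ _ _).trans ((Functor.map_comp _ _ _).symm.trans ?_)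
    congr 1

lemma ta_to_tcl {X Y : Adm 𝔄} {f : X ⟶ Y} (hf : Ta f) :
    Tcl ((ObjectProperty.ι (Admissible (𝔄 := 𝔄))).map f) := by
  induction hf with
  | of f hf => exact TclAux.of _ hf
  | id X =>
    have : ((ObjectProperty.ι (Admissible (𝔄 := 𝔄))).map (𝟙 X))
        = 𝟙 ((ObjectProperty.ι (Admissible (𝔄 := 𝔄))).obj X) := (ObjectProperty.ι (Admissible (𝔄 := 𝔄))).map_id X
    rw [this]; exact TclAux.id _
  | comp f g hf hg ih₁ ih₂ => rw [Functor.map_comp]; exact TclAux.comp _ _ ih₁ ih₂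

section main

noncomputable def ι' : Adm 𝔄 ⥤ (PiSet ⥤ 𝔄) := ObjectProperty.ι (Admissible (𝔄 := 𝔄))

noncomputable def Fc' : (Sa (𝔄 := 𝔄)).Localization ⥤ (Scl (𝔄 := 𝔄)).Localization :=
  Localization.Construction.lift (ι' ⋙ (Scl (𝔄 := 𝔄)).Q)
    (fun _ _ f hf => (Scl (𝔄 := 𝔄)).Q_inverts _ hf)

lemma Fc'_fac : (Sa (𝔄 := 𝔄)).Q ⋙ Fc' = ι' (𝔄 := 𝔄) ⋙ (Scl (𝔄 := 𝔄)).Q :=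
  Localization.Construction.fac _ _

/-- object-level compatibility -/
lemma eobj (X : Adm 𝔄) :
    Fc'.obj ((Sa (𝔄 := 𝔄)).Q.obj X) = (Scl (𝔄 := 𝔄)).Q.obj (ι' (𝔄 := 𝔄)|>.obj X) :=
  Functor.congr_obj Fc'_fac X

/-- The image under `Fc'` of the morphism attached to a right fraction. -/
lemma Fc'_map_fraction {X Y : Adm 𝔄} (z : (Ta (𝔄 := 𝔄)).RightFraction X Y) :
    Fc'.map (z.map (Sa (𝔄 := 𝔄)).Q (Localization.inverts _ (Ta (𝔄 := 𝔄)))) =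
      eqToHom (eobj X) ≫
        (MorphismProperty.RightFraction.mk ((ι' (𝔄 := 𝔄)).map z.s) (ta_to_tcl z.hs)
            ((ι' (𝔄 := 𝔄)).map z.f)).map (Scl (𝔄 := 𝔄)).Q
          (Localization.inverts _ (Tcl (𝔄 := 𝔄))) ≫ eqToHom (eobj Y).symm := by
  have hs2 : IsIso ((Scl (𝔄 := 𝔄)).Q.map ((ι' (𝔄 := 𝔄)).map z.s)) :=
    Localization.inverts _ (Tcl (𝔄 := 𝔄)) _ (ta_to_tcl z.hs)
  have hs1 : IsIso ((Sa (𝔄 := 𝔄)).Q.map z.s) :=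
    Localization.inverts _ (Ta (𝔄 := 𝔄)) _ z.hs
  have h1 := Functor.congr_hom Fc'_fac z.s
  have h2 := Functor.congr_hom Fc'_fac z.f
  dsimp [MorphismProperty.RightFraction.map]
  simp only [Functor.comp_map] at h1 h2
  have hinv : inv (Fc'.map ((Sa (𝔄 := 𝔄)).Q.map z.s))
      = eqToHom (eobj X) ≫ inv ((Scl (𝔄 := 𝔄)).Q.map ((ι' (𝔄 := 𝔄)).map z.s)) ≫
        eqToHom (eobj z.X').symm := by
    apply IsIso.inv_eq_of_hom_inv_id
    rw [h1]
    simp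
  rw [Functor.map_comp, Functor.map_inv, hinv, h2]
  simp

end main

/-- The canonical functor `lim↔ 𝔄 = S_a⁻¹ 𝔄^Π_a → lim↔^{ab} 𝔄 = S⁻¹ 𝔄^Π`
(the one compatible with the localization functors and the inclusion
`𝔄^Π_a ⊆ 𝔄^Π`) is fully faithful. -/
theorem lim_to_limab_fullyFaithful :
    ∃ Fc : (Sa (𝔄 := 𝔄)).Localization ⥤ (Scl (𝔄 := 𝔄)).Localization,
      (Sa (𝔄 := 𝔄)).Q ⋙ Fc
          = ObjectProperty.ι (Admissible (𝔄 := 𝔄)) ⋙ (Scl (𝔄 := 𝔄)).Q ∧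
      Fc.Full ∧ Fc.Faithful := by
  refine ⟨Fc', Fc'_fac, ⟨?_⟩, ⟨?_⟩⟩
  · -- fullness
    rintro a b g
    obtain ⟨X, rfl⟩ := (Localization.Construction.objEquiv (Sa (𝔄 := 𝔄))).surjective a
    obtain ⟨Y, rfl⟩ := (Localization.Construction.objEquiv (Sa (𝔄 := 𝔄))).surjective b
    obtain ⟨ζ, hζ⟩ := Localization.exists_rightFraction (Scl (𝔄 := 𝔄)).Q (Tcl (𝔄 := 𝔄))
      (eqToHom (eobj X).symm ≫ g ≫ eqToHom (eobj Y))
    obtain ⟨ρ, hρ, hge, w, hw⟩ := dom ζ.s ζ.hs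
    let Z' : Adm 𝔄 := ⟨tilde ρ hρ.1 ((ι' (𝔄 := 𝔄)).obj X),
      admissible_tilde ρ hρ.1 _ X.property⟩
    let z : (Ta (𝔄 := 𝔄)).RightFraction X Y :=
      MorphismProperty.RightFraction.mk
        (X' := Z') (ObjectProperty.homMk (canMap ρ id hρ.1 monotone_id hge ((ι' (𝔄 := 𝔄)).obj X)))
        (TaAux.of _ (Scl_can_id ρ hρ hge _)) (ObjectProperty.homMk (show Z'.obj ⟶ (ι' (𝔄 := 𝔄)).obj Y from w ≫ ζ.f))
    have hrel : MorphismProperty.RightFractionRel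
        (MorphismProperty.RightFraction.mk ((ι' (𝔄 := 𝔄)).map z.s) (ta_to_tcl z.hs)
          ((ι' (𝔄 := 𝔄)).map z.f)) ζ := by
      refine ⟨tilde ρ hρ.1 ((ι' (𝔄 := 𝔄)).obj X), 𝟙 _, w, ?_, ?_, ?_⟩
      · show 𝟙 _ ≫ canMap ρ id hρ.1 monotone_id hge _ = w ≫ ζ.s
        rw [Category.id_comp, hw]
      · show 𝟙 _ ≫ (w ≫ ζ.f) = w ≫ ζ.f
        rw [Category.id_comp]
      · show Tcl (𝟙 _ ≫ canMap ρ id hρ.1 monotone_id hge _)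
        rw [Category.id_comp]
        exact TclAux.of _ (Scl_can_id ρ hρ hge _)
    have heq2 := (MorphismProperty.RightFraction.map_eq_iff (Scl (𝔄 := 𝔄)).Q
      (Tcl (𝔄 := 𝔄)) _ ζ).2 hrel
    refine ⟨z.map (Sa (𝔄 := 𝔄)).Q (Localization.inverts _ _), ?_⟩
    refine (Fc'_map_fraction z).trans ?_
    rw [heq2, ← hζ]
    simp
    exact (Category.assoc _ _ _).trans
      ((congrArg (g ≫ ·) ((eqToHom_trans _ _).trans (eqToHom_refl _ _))).trans (Category.comp_id g))
  · -- faithfulness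
    rintro a b g₁ g₂ hF
    obtain ⟨X, rfl⟩ := (Localization.Construction.objEquiv (Sa (𝔄 := 𝔄))).surjective a
    obtain ⟨Y, rfl⟩ := (Localization.Construction.objEquiv (Sa (𝔄 := 𝔄))).surjective b
    obtain ⟨z₁, rfl⟩ := Localization.exists_rightFraction (Sa (𝔄 := 𝔄)).Q (Ta (𝔄 := 𝔄)) g₁
    obtain ⟨z₂, rfl⟩ := Localization.exists_rightFraction (Sa (𝔄 := 𝔄)).Q (Ta (𝔄 := 𝔄)) g₂
    replace hF := (Fc'_map_fraction z₁).symm.trans (hF.trans (Fc'_map_fraction z₂))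
    have hF' := congrArg (fun t => eqToHom (eobj X).symm ≫ t ≫ eqToHom (eobj Y)) hF
    simp only [Category.assoc, eqToHom_trans, eqToHom_refl, Category.comp_id,
      Category.id_comp, eqToHom_trans_assoc] at hF'
    have hrel := (MorphismProperty.RightFraction.map_eq_iff (Scl (𝔄 := 𝔄)).Q
      (Tcl (𝔄 := 𝔄)) _ _).1 hF'
    obtain ⟨Z, t₁, t₂, hst, hft, hw⟩ := hrel
    obtain ⟨ρ, hρ, hge, w, hweq⟩ := dom (t₁ ≫ (ι' (𝔄 := 𝔄)).map z₁.s) hw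
    let Z' : Adm 𝔄 := ⟨tilde ρ hρ.1 ((ι' (𝔄 := 𝔄)).obj X),
      admissible_tilde ρ hρ.1 _ X.property⟩
    refine (MorphismProperty.RightFraction.map_eq_iff (Sa (𝔄 := 𝔄)).Q
      (Ta (𝔄 := 𝔄)) z₁ z₂).2 ⟨Z', (ObjectProperty.homMk (show Z'.obj ⟶ (ι' (𝔄 := 𝔄)).obj z₁.X' from w ≫ t₁)),
        (ObjectProperty.homMk (show Z'.obj ⟶ (ι' (𝔄 := 𝔄)).obj z₂.X' from w ≫ t₂)), ?_, ?_, ?_⟩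
    · apply ObjectProperty.hom_ext
      show (w ≫ t₁) ≫ (ι' (𝔄 := 𝔄)).map z₁.s = (w ≫ t₂) ≫ (ι' (𝔄 := 𝔄)).map z₂.s
      rw [Category.assoc, Category.assoc, hst]
    · apply ObjectProperty.hom_ext
      show (w ≫ t₁) ≫ (ι' (𝔄 := 𝔄)).map z₁.f = (w ≫ t₂) ≫ (ι' (𝔄 := 𝔄)).map z₂.f
      rw [Category.assoc, Category.assoc, hft]
    · show Ta ((ObjectProperty.homMk (show Z'.obj ⟶ (ι' (𝔄 := 𝔄)).obj z₁.X' from w ≫ t₁)) ≫ z₁.s)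
      have : ((ObjectProperty.homMk (show Z'.obj ⟶ (ι' (𝔄 := 𝔄)).obj z₁.X' from w ≫ t₁)) ≫ z₁.s : Z' ⟶ X)
          = ObjectProperty.homMk (canMap ρ id hρ.1 monotone_id hge ((ι' (𝔄 := 𝔄)).obj X)) := by
        apply ObjectProperty.hom_ext
        show (w ≫ t₁) ≫ (ι' (𝔄 := 𝔄)).map z₁.s = _
        rw [Category.assoc, hweq]
        rfl
      rw [this]
      exact TaAux.of _ (Scl_can_id ρ hρ hge _)
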